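/- Fix p ≥ 1 and T > 0. The function v(τ,x) = K e^{rτ + x}(N(d₁(τ,x)) − 1), where d₁(τ,x) = (x + (r+σ²/2)τ)/(σ√τ), σ > 0, r ≥ 0, K > 0, satisfies ‖∂_x v(τ,·)‖_{L^p} ≤ C₀ τ^{-1/2 + 1/(2p)} for all 0 < τ ≤ T, where C₀ depends only on p, σ, r, T, K. Consequently ‖v(τ,·)‖_{W^{1,p}} ≤ C₀' τ^{-1/2 + 1/(2p)}. -/

import Mathlib

open MeasureTheory Real
/-- Standard normal cumulative distribution function. -/
noncomputable def stdNormalCDF (d : ℝ) : ℝ :=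
  ∫ ξ in Set.Iio d, Real.exp (-ξ ^ 2 / 2) / Real.sqrt (2 * Real.pi)

/-- Black–Scholes argument `d₁(τ,x) = (x + (r + σ²/2)τ)/(σ√τ)`. -/
noncomputable def dOne (σ r τ x : ℝ) : ℝ :=
  (x + (r + σ ^ 2 / 2) * τ) / (σ * Real.sqrt τ)

/-- `v(τ,x) = K e^{rτ+x}(N(d₁(τ,x)) − 1)`. -/
noncomputable def vBS (σ r K τ x : ℝ) : ℝ :=
  K * Real.exp (r * τ + x) * (stdNormalCDF (dOne σ r τ x) - 1)

open Set NNReal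

noncomputable def bsPhi (ξ : ℝ) : ℝ := Real.exp (-ξ ^ 2 / 2) / Real.sqrt (2 * Real.pi)

lemma bsPhi_eq : bsPhi = fun ξ => Real.exp (-(1/2 : ℝ) * ξ ^ 2) * (Real.sqrt (2 * Real.pi))⁻¹ := by
  funext ξ; rw [bsPhi, div_eq_mul_inv]; ring_nf

lemma bsPhi_cont : Continuous bsPhi := by
  rw [bsPhi_eq]; fun_prop

lemma bsPhi_integrable : Integrable bsPhi := by
  rw [bsPhi_eq]
  exact (integrable_exp_neg_mul_sq (by norm_num)).mul_const _

lemma bsPhi_integral : ∫ ξ, bsPhi ξ = 1 := by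
  rw [bsPhi_eq]
  rw [integral_mul_const, integral_gaussian]
  rw [show (π : ℝ) / (1/2) = 2 * π by ring]
  rw [mul_inv_cancel₀ (by positivity : Real.sqrt (2*π) ≠ 0)]

lemma bsPhi_nonneg (ξ : ℝ) : 0 ≤ bsPhi ξ := by
  rw [bsPhi]; positivity

lemma cdf_eq_Iic (d : ℝ) : stdNormalCDF d = ∫ ξ in Iic d, bsPhi ξ :=
  setIntegral_congr_set (Iio_ae_eq_Iic)

lemma hasDerivAt_stdNormalCDF (d : ℝ) : HasDerivAt stdNormalCDF (bsPhi d) d := by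
  have key : ∀ e : ℝ, stdNormalCDF e = stdNormalCDF 0 + ∫ ξ in (0:ℝ)..e, bsPhi ξ := by
    intro e
    rw [cdf_eq_Iic, cdf_eq_Iic,
      ← intervalIntegral.integral_Iic_sub_Iic bsPhi_integrable.integrableOn
        bsPhi_integrable.integrableOn]
    ring
  have h : HasDerivAt (fun e => stdNormalCDF 0 + ∫ ξ in (0:ℝ)..e, bsPhi ξ) (bsPhi d) d := by
    refine HasDerivAt.const_add _ ?_
    exact intervalIntegral.integral_hasDerivAt_right
      (bsPhi_integrable.intervalIntegrable)
      (bsPhi_cont.aestronglyMeasurable.stronglyMeasurableAtFilter)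
      bsPhi_cont.continuousAt
  exact h.congr_of_eventuallyEq (Filter.Eventually.of_forall fun e => (key e))

lemma cdf_nonneg (d : ℝ) : 0 ≤ stdNormalCDF d := by
  rw [cdf_eq_Iic]
  exact setIntegral_nonneg measurableSet_Iic fun ξ _ => bsPhi_nonneg ξ

lemma cdf_le_one (d : ℝ) : stdNormalCDF d ≤ 1 := by
  rw [cdf_eq_Iic, ← bsPhi_integral]
  exact setIntegral_le_integral bsPhi_integrable (Filter.Eventually.of_forall bsPhi_nonneg)

lemma bsPhi_shift_integrable (d : ℝ) : Integrable (fun ξ : ℝ => bsPhi (ξ - d)) := by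
  have := (measurePreserving_sub_right (volume : Measure ℝ) d).integrable_comp
    bsPhi_integrable.aestronglyMeasurable
  exact this.mpr bsPhi_integrable

lemma cdf_tail (d : ℝ) (hd : 0 ≤ d) : 1 - stdNormalCDF d ≤ Real.exp (-d^2/2) := by
  have hsplit : stdNormalCDF d + ∫ ξ in Ici d, bsPhi ξ = 1 := by
    rw [show stdNormalCDF d = ∫ ξ in Iio d, bsPhi ξ from rfl, ← bsPhi_integral]
    exact intervalIntegral.integral_Iio_add_Ici bsPhi_integrable.integrableOn bsPhi_integrable.integrableOn
  have h1 : 1 - stdNormalCDF d = ∫ ξ in Ici d, bsPhi ξ := by linarith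
  rw [h1]
  have hmono : ∫ ξ in Ici d, bsPhi ξ ≤ ∫ ξ in Ici d, Real.exp (-d^2/2) * bsPhi (ξ - d) := by
    refine setIntegral_mono_on bsPhi_integrable.integrableOn
      (((bsPhi_shift_integrable d).const_mul _).integrableOn) measurableSet_Ici ?_
    intro ξ hξ
    simp only [mem_Ici] at hξ
    unfold bsPhi
    have key : Real.exp (-ξ^2/2) ≤ Real.exp (-d^2/2) * Real.exp (-(ξ-d)^2/2) := by
      rw [← Real.exp_add]; refine Real.exp_le_exp.mpr ?_; nlinarith
    calc Real.exp (-ξ^2/2) / Real.sqrt (2*π)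
        ≤ (Real.exp (-d^2/2) * Real.exp (-(ξ-d)^2/2)) / Real.sqrt (2*π) := by gcongr
      _ = Real.exp (-d^2/2) * (Real.exp (-(ξ-d)^2/2) / Real.sqrt (2*π)) := mul_div_assoc _ _ _
  refine hmono.trans ?_
  have h2 : ∫ ξ in Ici d, Real.exp (-d^2/2) * bsPhi (ξ - d) ≤
      ∫ ξ : ℝ, Real.exp (-d^2/2) * bsPhi (ξ - d) := by
    refine setIntegral_le_integral ((bsPhi_shift_integrable d).const_mul _)
      (Filter.Eventually.of_forall fun ξ => ?_)
    have := bsPhi_nonneg (ξ - d); positivity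
  refine h2.trans ?_
  rw [integral_const_mul]
  rw [show (∫ ξ : ℝ, bsPhi (ξ - d)) = ∫ ξ : ℝ, bsPhi ξ from integral_sub_right_eq_self _ d]
  rw [bsPhi_integral, mul_one]

lemma hasDerivAt_vBS (σ r K τ : ℝ) (x : ℝ) :
    HasDerivAt (fun y => vBS σ r K τ y)
      (vBS σ r K τ x + K * Real.exp (r*τ+x) * bsPhi (dOne σ r τ x) * (σ * Real.sqrt τ)⁻¹) x := by
  have hd1 : HasDerivAt (fun y => dOne σ r τ y) (σ * Real.sqrt τ)⁻¹ x := by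
    have he : (fun y => dOne σ r τ y) = fun y => (y + (r + σ^2/2)*τ) * (σ * Real.sqrt τ)⁻¹ := by
      funext y; rw [dOne, div_eq_mul_inv]
    rw [he]
    simpa using ((hasDerivAt_id x).add_const ((r + σ^2/2)*τ)).mul_const (σ * Real.sqrt τ)⁻¹
  have hΦ : HasDerivAt (fun y => stdNormalCDF (dOne σ r τ y))
      (bsPhi (dOne σ r τ x) * (σ * Real.sqrt τ)⁻¹) x :=
    (hasDerivAt_stdNormalCDF (dOne σ r τ x)).comp x hd1
  have hexp : HasDerivAt (fun y => K * Real.exp (r*τ+y)) (K * Real.exp (r*τ+x)) x := by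
    have h0 : HasDerivAt (fun y : ℝ => r*τ+y) 1 x := (hasDerivAt_id x).const_add (r*τ)
    simpa using (h0.exp.const_mul K)
  have := hexp.mul (hΦ.sub_const 1)
  have hv : (fun y => vBS σ r K τ y) =
      fun y => (K * Real.exp (r*τ+y)) * (stdNormalCDF (dOne σ r τ y) - 1) := rfl
  rw [hv]
  refine this.congr_deriv ?_
  unfold vBS
  ring

lemma gauss_ident (σ r τ x : ℝ) (hσ : 0 < σ) (hτ : 0 < τ) :
    Real.exp (r*τ+x) * bsPhi (dOne σ r τ x)
      = bsPhi ((x + (r - σ^2/2)*τ)/(σ * Real.sqrt τ)) := by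
  have hs0 : σ * Real.sqrt τ ≠ 0 := by positivity
  have hsq : Real.sqrt τ ^ 2 = τ := Real.sq_sqrt hτ.le
  unfold bsPhi dOne
  rw [div_eq_mul_inv, div_eq_mul_inv, ← mul_assoc, ← Real.exp_add]
  congr 2
  field_simp
  linear_combination (8*σ^2*(r*τ+x)) * hsq

lemma integrable_gauss_shift (b m : ℝ) (hb : 0 < b) :
    Integrable (fun x : ℝ => Real.exp (-b*(x+m)^2)) := by
  have h := (measurePreserving_add_right (volume : Measure ℝ) m).integrable_comp
    (integrable_exp_neg_mul_sq hb).aestronglyMeasurable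
  exact h.mpr (integrable_exp_neg_mul_sq hb)

lemma integral_gauss_shift (b m : ℝ) :
    (∫ x : ℝ, Real.exp (-b*(x+m)^2)) = Real.sqrt (π / b) := by
  exact (integral_add_right_eq_self (fun y : ℝ => Real.exp (-b*y^2)) m).trans
    (integral_gaussian b)

lemma integrable_exp_neg_abs (c : ℝ) (hc : 0 < c) :
    Integrable (fun x : ℝ => Real.exp (-c * |x|)) := by
  have hIoi : IntegrableOn (fun x : ℝ => Real.exp (-c * |x|)) (Ioi 0) := by
    refine (exp_neg_integrableOn_Ioi 0 hc).congr_fun ?_ measurableSet_Ioi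
    intro x hx
    show Real.exp (-c * x) = Real.exp (-c * |x|)
    rw [abs_of_pos hx]
  have hIic : IntegrableOn (fun x : ℝ => Real.exp (-c * |x|)) (Iic 0) := by
    rw [← Measure.map_neg_eq_self (volume : Measure ℝ)]
    have m : MeasurableEmbedding fun x : ℝ => -x :=
      (Homeomorph.neg ℝ).measurableEmbedding
    rw [m.integrableOn_map_iff]
    simp_rw [Function.comp_def, abs_neg, neg_preimage, neg_Iic, neg_zero]
    exact (integrableOn_Ici_iff_integrableOn_Ioi).mpr hIoi
  rw [← integrableOn_univ, ← Iic_union_Ioi (a := (0:ℝ))]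
  exact hIic.union hIoi

lemma bs_rpow_add_le {a b z : ℝ} (ha : 0 ≤ a) (hb : 0 ≤ b) (hz0 : 0 ≤ z) (hz1 : z ≤ 1) :
    (a+b)^z ≤ a^z + b^z := by
  have h := NNReal.rpow_add_le_add_rpow a.toNNReal b.toNNReal hz0 hz1
  calc (a+b)^z = ((a.toNNReal + b.toNNReal : ℝ≥0) : ℝ)^z := by
        rw [NNReal.coe_add, Real.coe_toNNReal _ ha, Real.coe_toNNReal _ hb]
    _ = (((a.toNNReal + b.toNNReal) ^ z : ℝ≥0) : ℝ) := by rw [NNReal.coe_rpow]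
    _ ≤ ((a.toNNReal ^ z + b.toNNReal ^ z : ℝ≥0) : ℝ) := NNReal.coe_le_coe.mpr h
    _ = a^z + b^z := by
        rw [NNReal.coe_add, NNReal.coe_rpow, NNReal.coe_rpow,
          Real.coe_toNNReal _ ha, Real.coe_toNNReal _ hb]

lemma bs_two_rpow {a b p : ℝ} (ha : 0 ≤ a) (hb : 0 ≤ b) (hp : 1 ≤ p) :
    (a+b)^p ≤ 2^p * (a^p + b^p) := by
  have hm : 0 ≤ max a b := le_max_of_le_left ha
  have hp0 : (0:ℝ) ≤ p := by linarith
  calc (a+b)^p ≤ (2*max a b)^p := by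
        refine Real.rpow_le_rpow (by positivity) ?_ hp0
        rcases le_total a b with h|h
        · rw [max_eq_right h]; linarith
        · rw [max_eq_left h]; linarith
    _ = 2^p * (max a b)^p := Real.mul_rpow (by norm_num) hm
    _ ≤ 2^p * (a^p + b^p) := by
        refine mul_le_mul_of_nonneg_left ?_ (Real.rpow_nonneg (by norm_num) p)
        rcases le_total a b with h|h
        · rw [max_eq_right h]; exact le_add_of_nonneg_left (Real.rpow_nonneg ha p)
        · rw [max_eq_left h]; exact le_add_of_nonneg_right (Real.rpow_nonneg hb p)

lemma bs_rpow_rpow_inv {B p : ℝ} (hB : 0 ≤ B) (hp : p ≠ 0) : (B^p)^(1/p) = B := by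
  rw [← Real.rpow_mul hB, mul_one_div_cancel hp, Real.rpow_one]

set_option maxHeartbeats 2000000 in
/-- `‖∂ₓ v(τ,·)‖_{L^p} ≤ C₀ τ^{-1/2+1/(2p)}` for `0 < τ ≤ T`, and
consequently the `W^{1,p}` norm of `v(τ,·)` obeys the same power bound. -/
theorem bs_call_derivative_W1p_bound
    (σ r K p T : ℝ) (hσ : 0 < σ) (hr : 0 ≤ r) (hK : 0 < K)
    (hp : 1 ≤ p) (hT : 0 < T) :
    ∃ C₀ : ℝ, 0 < C₀ ∧ ∃ C₀' : ℝ, 0 < C₀' ∧ ∀ τ : ℝ, 0 < τ → τ ≤ T →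
      (∫ x : ℝ, |deriv (fun y => vBS σ r K τ y) x| ^ p) ^ (1 / p) ≤
        C₀ * τ ^ (-(1 / 2 : ℝ) + 1 / (2 * p)) ∧
      (∫ x : ℝ, |vBS σ r K τ x| ^ p) ^ (1 / p) +
        (∫ x : ℝ, |deriv (fun y => vBS σ r K τ y) x| ^ p) ^ (1 / p) ≤
        C₀' * τ ^ (-(1 / 2 : ℝ) + 1 / (2 * p)) := by
  have hp0 : 0 < p := lt_of_lt_of_le one_pos hp
  have hpne : p ≠ 0 := ne_of_gt hp0
  have hq0 : 0 < 1/p := by positivity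
  have hq1 : 1/p ≤ 1 := by rw [div_le_one hp0]; exact hp
  have he_le : (-(1/2 : ℝ) + 1/(2*p)) ≤ 0 := by
    have h2 : 1/(2*p) ≤ 1/2 := by
      apply one_div_le_one_div_of_le
      · norm_num
      · linarith
    linarith
  set e : ℝ := -(1/2 : ℝ) + 1/(2*p) with he_def
  set J : ℝ := ∫ x : ℝ, Real.exp (-p * |x|) with hJ_def
  have hJ0 : 0 ≤ J := integral_nonneg fun x => (Real.exp_pos _).le
  set B : ℝ := K * Real.exp (r*T) * Real.exp (2*σ^2*T) with hB_def
  have hB : 0 < B := by positivity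
  set Cw : ℝ := K * (σ * Real.sqrt (2*π)) ^ (1/p - 1) with hCw_def
  have hsp : (0:ℝ) < σ * Real.sqrt (2*π) := by positivity
  have hCw : 0 < Cw := mul_pos hK (Real.rpow_pos_of_pos hsp _)
  set Mv : ℝ := B * J ^ (1/p) with hMv_def
  have hMv0 : 0 ≤ Mv := mul_nonneg hB.le (Real.rpow_nonneg hJ0 _)
  set D : ℝ := Mv * T ^ (-e) with hD_def
  have hD0 : 0 ≤ D := mul_nonneg hMv0 (Real.rpow_nonneg hT.le _)
  refine ⟨2*(D+Cw)+1, by linarith, (2*(D+Cw)+1) + D + 1, by linarith, ?_⟩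
  intro τ hτ hτle
  have hτe : 0 < τ ^ e := Real.rpow_pos_of_pos hτ _
  have hMvD : Mv ≤ D * τ ^ e := by
    have h1 : T ^ e ≤ τ ^ e := Real.rpow_le_rpow_of_nonpos hτ hτle he_le
    have h2 : Mv = Mv * T ^ (-e) * T ^ e := by
      rw [mul_assoc, ← Real.rpow_add hT, neg_add_cancel, Real.rpow_zero, mul_one]
    calc Mv = Mv * T ^ (-e) * T ^ e := h2
      _ ≤ Mv * T ^ (-e) * τ ^ e :=
          mul_le_mul_of_nonneg_left h1 (mul_nonneg hMv0 (Real.rpow_nonneg hT.le _))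
      _ = D * τ ^ e := by rw [hD_def]
  -- notation for this τ
  set s : ℝ := σ * Real.sqrt τ with hs_def
  have hs : 0 < s := by positivity
  have hsq : s^2 = σ^2 * τ := by rw [hs_def, mul_pow, Real.sq_sqrt hτ.le]
  set m : ℝ := (r - σ^2/2)*τ with hm_def
  set c₁ : ℝ := K / (s * Real.sqrt (2*π)) with hc₁_def
  have hc₁ : 0 < c₁ := by positivity
  -- the Gaussian form of the second term of the derivative
  have hwid : ∀ x : ℝ, K * Real.exp (r*τ+x) * bsPhi (dOne σ r τ x) * s⁻¹
      = c₁ * Real.exp (-(1/(2*s^2))*(x+m)^2) := by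
    intro x
    have h := gauss_ident σ r τ x hσ hτ
    have hexp : -((x+m)/s)^2/2 = -(1/(2*s^2))*(x+m)^2 := by
      rw [div_pow]
      ring
    calc K * Real.exp (r*τ+x) * bsPhi (dOne σ r τ x) * s⁻¹
        = K * s⁻¹ * (Real.exp (r*τ+x) * bsPhi (dOne σ r τ x)) := by ring
      _ = K * s⁻¹ * bsPhi ((x+m)/s) := by rw [h]
      _ = c₁ * Real.exp (-(1/(2*s^2))*(x+m)^2) := by
          rw [bsPhi, hexp, hc₁_def]
          field_simp
  -- pointwise bound on v
  have hbnd_v : ∀ x : ℝ, |vBS σ r K τ x| ≤ B * Real.exp (-|x|) := by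
    intro x
    have hΦ1 := cdf_le_one (dOne σ r τ x)
    have hΦ0 := cdf_nonneg (dOne σ r τ x)
    have habs : |vBS σ r K τ x|
        = K * Real.exp (r*τ+x) * (1 - stdNormalCDF (dOne σ r τ x)) := by
      rw [vBS, abs_mul, abs_of_nonpos (by linarith : stdNormalCDF (dOne σ r τ x) - 1 ≤ 0),
        abs_of_nonneg (by positivity : (0:ℝ) ≤ K * Real.exp (r*τ+x))]
      ring
    rw [habs]
    have hrr : Real.exp (r*τ) ≤ Real.exp (r*T) := Real.exp_le_exp.mpr (mul_le_mul_of_nonneg_left hτle hr)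
    rcases le_total x 0 with hx | hx
    · rw [abs_of_nonpos hx, neg_neg]
      have h1 : K * Real.exp (r*τ+x) * (1 - stdNormalCDF (dOne σ r τ x))
          ≤ K * Real.exp (r*τ+x) * 1 :=
        mul_le_mul_of_nonneg_left (by linarith) (by positivity)
      refine h1.trans ?_
      rw [mul_one, Real.exp_add, hB_def]
      have h2 : (1:ℝ) ≤ Real.exp (2*σ^2*T) := by
        rw [← Real.exp_zero]; exact Real.exp_le_exp.mpr (by positivity)
      linarith [mul_le_mul_of_nonneg_left hrr
          (by positivity : (0:ℝ) ≤ K * Real.exp x),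
        mul_le_mul_of_nonneg_left h2
          (by positivity : (0:ℝ) ≤ K * Real.exp (r*T) * Real.exp x)]
    · rw [abs_of_nonneg hx]
      have hd0 : 0 ≤ dOne σ r τ x := by
        rw [dOne]
        apply div_nonneg _ hs.le
        linarith [mul_nonneg hr hτ.le, mul_nonneg (sq_nonneg σ) hτ.le]
      have htail := cdf_tail _ hd0
      have hd₁x : x/s ≤ dOne σ r τ x := by
        rw [dOne]
        exact (div_le_div_iff_of_pos_right hs).mpr (by linarith [mul_nonneg hr hτ.le, mul_nonneg (sq_nonneg σ) hτ.le])
      have hxs0 : 0 ≤ x/s := div_nonneg hx hs.le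
      have hsq2 : (x/s)^2 ≤ (dOne σ r τ x)^2 := pow_le_pow_left₀ hxs0 hd₁x 2
      have h1 : 1 - stdNormalCDF (dOne σ r τ x) ≤ Real.exp (-(x/s)^2/2) :=
        htail.trans (Real.exp_le_exp.mpr (by linarith))
      have hmain : Real.exp (r*τ+x) * Real.exp (-(x/s)^2/2)
          ≤ Real.exp (r*T) * Real.exp (2*σ^2*T) * Real.exp (-x) := by
        rw [← Real.exp_add, ← Real.exp_add, ← Real.exp_add]
        apply Real.exp_le_exp.mpr
        have hx_eq : (x/s)*s = x := div_mul_cancel₀ x hs.ne'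
        have hσT : σ^2*τ ≤ σ^2*T := mul_le_mul_of_nonneg_left hτle (sq_nonneg σ)
        linarith [sq_nonneg (x/s - 2*s), hx_eq, hsq, hσT, mul_le_mul_of_nonneg_left hτle hr]
      calc K * Real.exp (r*τ+x) * (1 - stdNormalCDF (dOne σ r τ x))
          = K * (Real.exp (r*τ+x) * (1 - stdNormalCDF (dOne σ r τ x))) := by ring
        _ ≤ K * (Real.exp (r*τ+x) * Real.exp (-(x/s)^2/2)) :=
            mul_le_mul_of_nonneg_left
              (mul_le_mul_of_nonneg_left h1 (Real.exp_pos _).le) hK.le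
        _ ≤ K * (Real.exp (r*T) * Real.exp (2*σ^2*T) * Real.exp (-x)) :=
            mul_le_mul_of_nonneg_left hmain hK.le
        _ = B * Real.exp (-x) := by rw [hB_def]; ring
  -- pointwise bound on derivative
  have hptw : ∀ x : ℝ, |deriv (fun y => vBS σ r K τ y) x| ^ p
      ≤ 2^p * ((B * Real.exp (-|x|))^p + (c₁ * Real.exp (-(1/(2*s^2))*(x+m)^2))^p) := by
    intro x
    have hDval := (hasDerivAt_vBS σ r K τ x).deriv
    have habs : |deriv (fun y => vBS σ r K τ y) x|
        ≤ B * Real.exp (-|x|) + c₁ * Real.exp (-(1/(2*s^2))*(x+m)^2) := by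
      rw [hDval]
      refine (abs_add_le _ _).trans ?_
      refine add_le_add (hbnd_v x) ?_
      rw [hwid x, abs_of_nonneg (by positivity)]
    calc |deriv (fun y => vBS σ r K τ y) x| ^ p
        ≤ (B * Real.exp (-|x|) + c₁ * Real.exp (-(1/(2*s^2))*(x+m)^2))^p :=
          Real.rpow_le_rpow (abs_nonneg _) habs hp0.le
      _ ≤ 2^p * ((B * Real.exp (-|x|))^p + (c₁ * Real.exp (-(1/(2*s^2))*(x+m)^2))^p) :=
          bs_two_rpow (by positivity) (by positivity) hp
  -- integrability of the majorants
  have hg1eq : (fun x : ℝ => (B * Real.exp (-|x|))^p)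
      = fun x => B^p * Real.exp (-p * |x|) := by
    funext x
    rw [Real.mul_rpow hB.le (Real.exp_pos _).le, ← Real.exp_mul]
    congr 1
    ring
  have hg2eq : (fun x : ℝ => (c₁ * Real.exp (-(1/(2*s^2))*(x+m)^2))^p)
      = fun x => c₁^p * Real.exp (-(p/(2*s^2)) * (x+m)^2) := by
    funext x
    rw [Real.mul_rpow hc₁.le (Real.exp_pos _).le, ← Real.exp_mul]
    congr 1
    ring
  have hint1 : Integrable (fun x : ℝ => (B * Real.exp (-|x|))^p) := by
    rw [hg1eq]; exact (integrable_exp_neg_abs p hp0).const_mul _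
  have hint2 : Integrable (fun x : ℝ => (c₁ * Real.exp (-(1/(2*s^2))*(x+m)^2))^p) := by
    rw [hg2eq]; exact (integrable_gauss_shift (p/(2*s^2)) m (by positivity)).const_mul _
  set G : ℝ := Real.sqrt (π / (p/(2*s^2))) with hG_def
  have hG0 : 0 ≤ G := Real.sqrt_nonneg _
  -- integral of g1 and g2
  have hI1 : (∫ x : ℝ, (B * Real.exp (-|x|))^p) = B^p * J := by
    rw [hg1eq, integral_const_mul]
  have hI2 : (∫ x : ℝ, (c₁ * Real.exp (-(1/(2*s^2))*(x+m)^2))^p) = c₁^p * G := by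
    rw [hg2eq, integral_const_mul, integral_gauss_shift]
  -- main integral bound for the derivative
  have hDint : (∫ x : ℝ, |deriv (fun y => vBS σ r K τ y) x| ^ p)
      ≤ 2^p * (B^p * J + c₁^p * G) := by
    have hgInt : Integrable (fun x : ℝ =>
        2^p * ((B * Real.exp (-|x|))^p + (c₁ * Real.exp (-(1/(2*s^2))*(x+m)^2))^p)) :=
      (hint1.add hint2).const_mul (2^p)
    have hmono := integral_mono_of_nonneg
      (Filter.Eventually.of_forall fun x => Real.rpow_nonneg (abs_nonneg _) p)
      hgInt
      (Filter.Eventually.of_forall hptw)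
    refine hmono.trans (le_of_eq ?_)
    rw [integral_const_mul, integral_add hint1 hint2, hI1, hI2]
  -- G bound
  have hGle : G ≤ s * Real.sqrt (2*π) := by
    rw [hG_def, show π / (p/(2*s^2)) = 2*π*s^2/p by field_simp]
    calc Real.sqrt (2*π*s^2/p) ≤ Real.sqrt (2*π*s^2) :=
          Real.sqrt_le_sqrt (div_le_self (by positivity) hp)
      _ = s * Real.sqrt (2*π) := by
          rw [show 2*π*s^2 = s^2*(2*π) by ring, Real.sqrt_mul (sq_nonneg s),
            Real.sqrt_sq hs.le]
  -- rpow computation for the w part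
  have hwpart : (c₁^p * G)^(1/p) ≤ Cw * τ ^ e := by
    have h1 : (c₁^p * G)^(1/p) ≤ (c₁^p * (s * Real.sqrt (2*π)))^(1/p) :=
      Real.rpow_le_rpow (mul_nonneg (Real.rpow_nonneg hc₁.le p) hG0)
        (mul_le_mul_of_nonneg_left hGle (Real.rpow_nonneg hc₁.le p)) hq0.le
    refine h1.trans (le_of_eq ?_)
    have hssp : (0:ℝ) < s * Real.sqrt (2*π) := by positivity
    rw [Real.mul_rpow (Real.rpow_nonneg hc₁.le p) hssp.le, bs_rpow_rpow_inv hc₁.le hpne]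
    have h2 : c₁ * (s * Real.sqrt (2*π))^(1/p) = K * (s * Real.sqrt (2*π))^(1/p - 1) := by
      rw [Real.rpow_sub hssp, Real.rpow_one, hc₁_def]
      field_simp
    rw [h2]
    have h3 : s * Real.sqrt (2*π) = (σ * Real.sqrt (2*π)) * Real.sqrt τ := by
      rw [hs_def]; ring
    rw [h3, Real.mul_rpow hsp.le (Real.sqrt_nonneg τ)]
    have h4 : (Real.sqrt τ) ^ ((1:ℝ)/p - 1) = τ ^ e := by
      rw [Real.sqrt_eq_rpow, ← Real.rpow_mul hτ.le]
      congr 1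
      rw [he_def]
      field_simp
      ring
    rw [h4, hCw_def]
    ring
  -- first inequality
  have hfirst : (∫ x : ℝ, |deriv (fun y => vBS σ r K τ y) x| ^ p) ^ (1/p)
      ≤ 2 * (Mv + Cw * τ ^ e) := by
    have h1 : (∫ x : ℝ, |deriv (fun y => vBS σ r K τ y) x| ^ p) ^ (1/p)
        ≤ (2^p * (B^p * J + c₁^p * G))^(1/p) :=
      Real.rpow_le_rpow
        (integral_nonneg fun x => Real.rpow_nonneg (abs_nonneg _) p) hDint hq0.le
    refine h1.trans ?_
    have hX0 : 0 ≤ B^p * J := mul_nonneg (Real.rpow_nonneg hB.le p) hJ0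
    have hY0 : 0 ≤ c₁^p * G := mul_nonneg (Real.rpow_nonneg hc₁.le p) hG0
    rw [Real.mul_rpow (Real.rpow_nonneg (by norm_num) p) (by positivity),
      bs_rpow_rpow_inv (by norm_num : (0:ℝ) ≤ 2) hpne]
    have h2 : (B^p * J + c₁^p * G)^(1/p) ≤ (B^p * J)^(1/p) + (c₁^p * G)^(1/p) :=
      bs_rpow_add_le hX0 hY0 hq0.le hq1
    have h3 : (B^p * J)^(1/p) = Mv := by
      rw [Real.mul_rpow (Real.rpow_nonneg hB.le p) hJ0, bs_rpow_rpow_inv hB.le hpne,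
        hMv_def]
    have h4 : (B^p * J)^(1/p) + (c₁^p * G)^(1/p) ≤ Mv + Cw * τ ^ e := by
      rw [h3]; exact add_le_add_right hwpart _
    linarith [h2, h4]
  have hfirst' : (∫ x : ℝ, |deriv (fun y => vBS σ r K τ y) x| ^ p) ^ (1/p)
      ≤ (2*(D+Cw)+1) * τ ^ e := by
    refine hfirst.trans ?_
    have h5 : 2 * (Mv + Cw * τ ^ e) ≤ 2 * (D * τ ^ e + Cw * τ ^ e) := by linarith
    refine h5.trans ?_
    nlinarith [hτe, hCw]
  constructor
  · exact hfirst'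
  · -- second inequality
    have hvint : (∫ x : ℝ, |vBS σ r K τ x| ^ p) ≤ B^p * J := by
      have hmono := integral_mono_of_nonneg
        (Filter.Eventually.of_forall fun x => Real.rpow_nonneg (abs_nonneg _) p)
        hint1
        (Filter.Eventually.of_forall fun x =>
          Real.rpow_le_rpow (abs_nonneg _) (hbnd_v x) hp0.le)
      exact hmono.trans (le_of_eq hI1)
    have hv1 : (∫ x : ℝ, |vBS σ r K τ x| ^ p) ^ (1/p) ≤ Mv := by
      have h1 : (∫ x : ℝ, |vBS σ r K τ x| ^ p) ^ (1/p) ≤ (B^p * J)^(1/p) :=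
        Real.rpow_le_rpow
          (integral_nonneg fun x => Real.rpow_nonneg (abs_nonneg _) p) hvint hq0.le
      refine h1.trans (le_of_eq ?_)
      rw [Real.mul_rpow (Real.rpow_nonneg hB.le p) hJ0, bs_rpow_rpow_inv hB.le hpne,
        hMv_def]
    have : (∫ x : ℝ, |vBS σ r K τ x| ^ p) ^ (1/p) ≤ D * τ ^ e := hv1.trans hMvD
    linarith [hfirst', hτe]
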